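/- Entropy dissipation for the 2D semi-discrete scheme: assume W is symmetric (W(−x, −y) = W(x, y) for all x, y ∈ ℝ) and let ρ : [0,∞) → ℝ^{N_x×N_y} be a solution of the 2D semi-discrete scheme with ρ_{i,j}(t) > 0 for all i, j and t ≥ 0. Then for every t ≥ 0 the discrete free energy E_h is differentiable at t with E_h'(t) ≤ −I_h(t), and moreover I_h(t) ≥ 0, where E_h(t) = Σ_{i=1}^{N_x} Σ_{j=1}^{N_y} h^x_i h^y_j (ρ_{i,j}(t) log ρ_{i,j}(t) + V(x_i, y_j) ρ_{i,j}(t) + (1/2) g_{i,j}(t) ρ_{i,j}(t)) with g_{i,j}(t) = Σ_{k=1}^{N_x} Σ_{l=1}^{N_y} h^x_k h^y_l W(x_k − x_i, y_l − y_j) ρ_{k,l}(t), and I_h(t) = Σ_{j=1}^{N_y} Σ_{i=1}^{N_x−1} h^y_j C_{i+1/2,j}(t) (log(ρ_{i+1,j}(t)/M_{i+1,j}(t)) − log(ρ_{i,j}(t)/M_{i,j}(t))) + Σ_{i=1}^{N_x} Σ_{j=1}^{N_y−1} h^x_i C_{i,j+1/2}(t) (log(ρ_{i,j+1}(t)/M_{i,j+1}(t))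 − log(ρ_{i,j}(t)/M_{i,j}(t))). -/

import Mathlib

lemma abel_aux (f φ : ℕ → ℝ) (N : ℕ) (hN : 1 ≤ N) :
    ∑ i ∈ Finset.Icc 1 N, (f i - f (i - 1)) * φ i
      = f N * φ N - f 0 * φ 1 - ∑ i ∈ Finset.Icc 1 (N - 1), f i * (φ (i + 1) - φ i) := by
  induction N, hN using Nat.le_induction with
  | base => simp; ring
  | succ N hN ih =>
    obtain ⟨m, rfl⟩ : ∃ m, N = m + 1 := ⟨N - 1, by omega⟩
    rw [Finset.sum_Icc_succ_top (by omega : 1 ≤ m + 1 + 1), ih]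
    have h1 : m + 1 + 1 - 1 = m + 1 := rfl
    rw [h1, Finset.sum_Icc_succ_top (by omega : 1 ≤ m + 1)]
    have h2 : m + 1 - 1 = m := rfl
    rw [h2]
    ring

lemma tele_aux (f : ℕ → ℝ) (N : ℕ) (hN : 1 ≤ N) :
    ∑ i ∈ Finset.Icc 1 N, (f i - f (i - 1)) = f N - f 0 := by
  have h := abel_aux f (fun _ => 1) N hN
  simpa using h

lemma log_mono_prod (u v : ℝ) (hu : 0 < u) (hv : 0 < v) :
    0 ≤ (v - u) * (Real.log v - Real.log u) := by
  rcases le_total u v with h | h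
  · exact mul_nonneg (by linarith) (by
      have := Real.log_le_log hu h
      linarith)
  · have h2 := Real.log_le_log hv h
    nlinarith

lemma quad_swap (A B : Finset ℕ) (f : ℕ → ℕ → ℕ → ℕ → ℝ) :
    ∑ i ∈ A, ∑ j ∈ B, ∑ k ∈ A, ∑ l ∈ B, f i j k l
      = ∑ i ∈ A, ∑ j ∈ B, ∑ k ∈ A, ∑ l ∈ B, f k l i j := by
  calc ∑ i ∈ A, ∑ j ∈ B, ∑ k ∈ A, ∑ l ∈ B, f i j k l
      = ∑ i ∈ A, ∑ k ∈ A, ∑ j ∈ B, ∑ l ∈ B, f i j k l :=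
        Finset.sum_congr rfl fun i _ => Finset.sum_comm
    _ = ∑ k ∈ A, ∑ i ∈ A, ∑ j ∈ B, ∑ l ∈ B, f i j k l := Finset.sum_comm
    _ = ∑ k ∈ A, ∑ i ∈ A, ∑ l ∈ B, ∑ j ∈ B, f i j k l :=
        Finset.sum_congr rfl fun k _ => Finset.sum_congr rfl fun i _ => Finset.sum_comm
    _ = ∑ k ∈ A, ∑ l ∈ B, ∑ i ∈ A, ∑ j ∈ B, f i j k l :=
        Finset.sum_congr rfl fun k _ => Finset.sum_comm



theorem semi_discrete_entropy_dissipation_2d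
    (Nx Ny : ℕ) (hNx : 2 ≤ Nx) (hNy : 2 ≤ Ny)
    (hx : ℕ → ℝ) (hxpos : ∀ i ∈ Finset.Icc 1 Nx, 0 < hx i)
    (hy : ℕ → ℝ) (hypos : ∀ j ∈ Finset.Icc 1 Ny, 0 < hy j)
    (a c : ℝ)
    (xhalf xc hxhalf : ℕ → ℝ) (yhalf yc hyhalf : ℕ → ℝ)
    (hxhalf0 : xhalf 0 = a)
    (hxhalfdef : ∀ i ∈ Finset.Icc 1 Nx, xhalf i = xhalf (i - 1) + hx i)
    (hxcdef : ∀ i ∈ Finset.Icc 1 Nx, xc i = xhalf (i - 1) + hx i / 2)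
    (hhxhalf : ∀ i ∈ Finset.Icc 1 (Nx - 1), hxhalf i = (hx i + hx (i + 1)) / 2)
    (hyhalf0 : yhalf 0 = c)
    (hyhalfdef : ∀ j ∈ Finset.Icc 1 Ny, yhalf j = yhalf (j - 1) + hy j)
    (hycdef : ∀ j ∈ Finset.Icc 1 Ny, yc j = yhalf (j - 1) + hy j / 2)
    (hhyhalf : ∀ j ∈ Finset.Icc 1 (Ny - 1), hyhalf j = (hy j + hy (j + 1)) / 2)
    (V W : ℝ → ℝ → ℝ)
    (Q : ℝ → ℝ → (ℕ → ℕ → ℝ) → ℝ)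
    (hQ : ∀ (x y : ℝ) (v : ℕ → ℕ → ℝ), Q x y v =
      Real.exp (-V x y - ∑ k ∈ Finset.Icc 1 Nx, ∑ l ∈ Finset.Icc 1 Ny,
        hx k * hy l * W (xc k - x) (yc l - y) * v k l))
    (ρ : ℝ → ℕ → ℕ → ℝ)
    (M Mxh Myh Cx Cy : ℝ → ℕ → ℕ → ℝ)
    (hM : ∀ t : ℝ, ∀ i ∈ Finset.Icc 1 Nx, ∀ j ∈ Finset.Icc 1 Ny,
      M t i j = Q (xc i) (yc j) (ρ t))
    (hMxh : ∀ t : ℝ, ∀ i ∈ Finset.Icc 1 (Nx - 1), ∀ j ∈ Finset.Icc 1 Ny,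
      Mxh t i j = Q (xhalf i) (yc j) (ρ t))
    (hMyh : ∀ t : ℝ, ∀ i ∈ Finset.Icc 1 Nx, ∀ j ∈ Finset.Icc 1 (Ny - 1),
      Myh t i j = Q (xc i) (yhalf j) (ρ t))
    (hCx : ∀ t : ℝ, ∀ i ∈ Finset.Icc 1 (Nx - 1), ∀ j ∈ Finset.Icc 1 Ny,
      Cx t i j = Mxh t i j / hxhalf i * (ρ t (i + 1) j / M t (i + 1) j - ρ t i j / M t i j))
    (hCy : ∀ t : ℝ, ∀ i ∈ Finset.Icc 1 Nx, ∀ j ∈ Finset.Icc 1 (Ny - 1),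
      Cy t i j = Myh t i j / hyhalf j * (ρ t i (j + 1) / M t i (j + 1) - ρ t i j / M t i j))
    (hCx0 : ∀ t : ℝ, ∀ j : ℕ, Cx t 0 j = 0) (hCxN : ∀ t : ℝ, ∀ j : ℕ, Cx t Nx j = 0)
    (hCy0 : ∀ t : ℝ, ∀ i : ℕ, Cy t i 0 = 0) (hCyN : ∀ t : ℝ, ∀ i : ℕ, Cy t i Ny = 0)
    (hode : ∀ i ∈ Finset.Icc 1 Nx, ∀ j ∈ Finset.Icc 1 Ny, ∀ t : ℝ, 0 ≤ t →
      HasDerivWithinAt (fun s => ρ s i j)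
        ((Cx t i j - Cx t (i - 1) j) / hx i + (Cy t i j - Cy t i (j - 1)) / hy j)
        (Set.Ici 0) t)
    (hWsymm : ∀ x y : ℝ, W (-x) (-y) = W x y)
    (hρpos : ∀ t : ℝ, 0 ≤ t → ∀ i ∈ Finset.Icc 1 Nx, ∀ j ∈ Finset.Icc 1 Ny, 0 < ρ t i j)
    (g : ℝ → ℕ → ℕ → ℝ)
    (hg : ∀ t : ℝ, ∀ i ∈ Finset.Icc 1 Nx, ∀ j ∈ Finset.Icc 1 Ny,
      g t i j = ∑ k ∈ Finset.Icc 1 Nx, ∑ l ∈ Finset.Icc 1 Ny,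
        hx k * hy l * W (xc k - xc i) (yc l - yc j) * ρ t k l)
    (E : ℝ → ℝ)
    (hE : ∀ t : ℝ, E t = ∑ i ∈ Finset.Icc 1 Nx, ∑ j ∈ Finset.Icc 1 Ny,
      hx i * hy j * (ρ t i j * Real.log (ρ t i j) + V (xc i) (yc j) * ρ t i j +
        1 / 2 * g t i j * ρ t i j))
    (I : ℝ → ℝ)
    (hI : ∀ t : ℝ, I t =
      (∑ j ∈ Finset.Icc 1 Ny, ∑ i ∈ Finset.Icc 1 (Nx - 1),
        hy j * Cx t i j * (Real.log (ρ t (i + 1) j / M t (i + 1) j) -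
          Real.log (ρ t i j / M t i j))) +
      ∑ i ∈ Finset.Icc 1 Nx, ∑ j ∈ Finset.Icc 1 (Ny - 1),
        hx i * Cy t i j * (Real.log (ρ t i (j + 1) / M t i (j + 1)) -
          Real.log (ρ t i j / M t i j))) :
    ∀ t : ℝ, 0 ≤ t →
      (∃ E' : ℝ, HasDerivWithinAt E E' (Set.Ici 0) t ∧ E' ≤ -I t) ∧ 0 ≤ I t := by
  intro t ht
  have hρt : ∀ i ∈ Finset.Icc 1 Nx, ∀ j ∈ Finset.Icc 1 Ny, 0 < ρ t i j := hρpos t ht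
  set D : ℕ → ℕ → ℝ := fun i j =>
    (Cx t i j - Cx t (i - 1) j) / hx i + (Cy t i j - Cy t i (j - 1)) / hy j with hD
  set φ : ℕ → ℕ → ℝ := fun i j => Real.log (ρ t i j / M t i j) with hφdef
  have hMeq : ∀ i ∈ Finset.Icc 1 Nx, ∀ j ∈ Finset.Icc 1 Ny,
      M t i j = Real.exp (-V (xc i) (yc j) - g t i j) := by
    intro i hi j hj
    rw [hM t i hi j hj, hQ, hg t i hi j hj]
  have hMpos : ∀ i ∈ Finset.Icc 1 Nx, ∀ j ∈ Finset.Icc 1 Ny, 0 < M t i j := by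
    intro i hi j hj
    rw [hMeq i hi j hj]; exact Real.exp_pos _
  have hφeq : ∀ i ∈ Finset.Icc 1 Nx, ∀ j ∈ Finset.Icc 1 Ny,
      φ i j = Real.log (ρ t i j) + V (xc i) (yc j) + g t i j := by
    intro i hi j hj
    simp only [hφdef]
    rw [Real.log_div (hρt i hi j hj).ne' (hMpos i hi j hj).ne', hMeq i hi j hj, Real.log_exp]
    ring
  have hρd : ∀ i ∈ Finset.Icc 1 Nx, ∀ j ∈ Finset.Icc 1 Ny,
      HasDerivWithinAt (fun s => ρ s i j) (D i j) (Set.Ici 0) t := by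
    intro i hi j hj
    simp only [hD]
    exact hode i hi j hj t ht
  set E' : ℝ := ∑ i ∈ Finset.Icc 1 Nx, ∑ j ∈ Finset.Icc 1 Ny, hx i * hy j *
      (D i j * Real.log (ρ t i j) + ρ t i j * (D i j / ρ t i j)
        + V (xc i) (yc j) * D i j
        + (1 / 2 * (∑ k ∈ Finset.Icc 1 Nx, ∑ l ∈ Finset.Icc 1 Ny,
            hx k * hy l * W (xc k - xc i) (yc l - yc j) * D k l) * ρ t i j
          + 1 / 2 * (∑ k ∈ Finset.Icc 1 Nx, ∑ l ∈ Finset.Icc 1 Ny,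
            hx k * hy l * W (xc k - xc i) (yc l - yc j) * ρ t k l) * D i j)) with hE'def
  have hEfun : E = fun s => ∑ i ∈ Finset.Icc 1 Nx, ∑ j ∈ Finset.Icc 1 Ny, hx i * hy j *
      (ρ s i j * Real.log (ρ s i j) + V (xc i) (yc j) * ρ s i j +
        1 / 2 * (∑ k ∈ Finset.Icc 1 Nx, ∑ l ∈ Finset.Icc 1 Ny,
          hx k * hy l * W (xc k - xc i) (yc l - yc j) * ρ s k l) * ρ s i j) := by
    funext s
    rw [hE s]
    exact Finset.sum_congr rfl fun i hi => Finset.sum_congr rfl fun j hj => by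
      rw [hg s i hi j hj]
  have hEd : HasDerivWithinAt E E' (Set.Ici 0) t := by
    rw [hEfun, hE'def]
    refine HasDerivWithinAt.fun_sum fun i hi => ?_
    refine HasDerivWithinAt.fun_sum fun j hj => ?_
    have hR := hρd i hi j hj
    have hlog : HasDerivWithinAt (fun s => ρ s i j * Real.log (ρ s i j))
        (D i j * Real.log (ρ t i j) + ρ t i j * (D i j / ρ t i j)) (Set.Ici 0) t :=
      hR.mul (hR.log (hρt i hi j hj).ne')
    have hV : HasDerivWithinAt (fun s => V (xc i) (yc j) * ρ s i j)
        (V (xc i) (yc j) * D i j) (Set.Ici 0) t :=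
      HasDerivWithinAt.const_mul _ hR
    have hG : HasDerivWithinAt
        (fun s => ∑ k ∈ Finset.Icc 1 Nx, ∑ l ∈ Finset.Icc 1 Ny,
          hx k * hy l * W (xc k - xc i) (yc l - yc j) * ρ s k l)
        (∑ k ∈ Finset.Icc 1 Nx, ∑ l ∈ Finset.Icc 1 Ny,
          hx k * hy l * W (xc k - xc i) (yc l - yc j) * D k l) (Set.Ici 0) t :=
      HasDerivWithinAt.fun_sum fun k hk => HasDerivWithinAt.fun_sum fun l hl =>
        HasDerivWithinAt.const_mul _ (hρd k hk l hl)
    exact HasDerivWithinAt.const_mul _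
      ((hlog.add hV).add ((HasDerivWithinAt.const_mul (1/2) hG).mul hR))
  -- termwise rearrangement
  have e1 : ∀ i ∈ Finset.Icc 1 Nx, ∀ j ∈ Finset.Icc 1 Ny,
      hx i * hy j *
      (D i j * Real.log (ρ t i j) + ρ t i j * (D i j / ρ t i j)
        + V (xc i) (yc j) * D i j
        + (1 / 2 * (∑ k ∈ Finset.Icc 1 Nx, ∑ l ∈ Finset.Icc 1 Ny,
            hx k * hy l * W (xc k - xc i) (yc l - yc j) * D k l) * ρ t i j
          + 1 / 2 * (∑ k ∈ Finset.Icc 1 Nx, ∑ l ∈ Finset.Icc 1 Ny,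
            hx k * hy l * W (xc k - xc i) (yc l - yc j) * ρ t k l) * D i j))
    = hx i * hy j * D i j * (φ i j + 1)
      + (1 / 2 * (∑ k ∈ Finset.Icc 1 Nx, ∑ l ∈ Finset.Icc 1 Ny,
          hx i * hy j * (hx k * hy l * W (xc k - xc i) (yc l - yc j)) * D k l * ρ t i j)
        - 1 / 2 * (∑ k ∈ Finset.Icc 1 Nx, ∑ l ∈ Finset.Icc 1 Ny,
          hx i * hy j * (hx k * hy l * W (xc k - xc i) (yc l - yc j)) * ρ t k l * D i j)) := by
    intro i hi j hj
    have hne : ρ t i j ≠ 0 := (hρt i hi j hj).ne'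
    have hdiv : ρ t i j * (D i j / ρ t i j) = D i j := by field_simp
    rw [hφeq i hi j hj, hg t i hi j hj, hdiv]
    have h1 : ∑ k ∈ Finset.Icc 1 Nx, ∑ l ∈ Finset.Icc 1 Ny,
        hx i * hy j * (hx k * hy l * W (xc k - xc i) (yc l - yc j)) * D k l * ρ t i j
      = hx i * hy j * ((∑ k ∈ Finset.Icc 1 Nx, ∑ l ∈ Finset.Icc 1 Ny,
          hx k * hy l * W (xc k - xc i) (yc l - yc j) * D k l) * ρ t i j) := by
      simp only [Finset.sum_mul, Finset.mul_sum]
      exact Finset.sum_congr rfl fun k _ => Finset.sum_congr rfl fun l _ => by ring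
    have h2 : ∑ k ∈ Finset.Icc 1 Nx, ∑ l ∈ Finset.Icc 1 Ny,
        hx i * hy j * (hx k * hy l * W (xc k - xc i) (yc l - yc j)) * ρ t k l * D i j
      = hx i * hy j * ((∑ k ∈ Finset.Icc 1 Nx, ∑ l ∈ Finset.Icc 1 Ny,
          hx k * hy l * W (xc k - xc i) (yc l - yc j) * ρ t k l) * D i j) := by
      simp only [Finset.sum_mul, Finset.mul_sum]
      exact Finset.sum_congr rfl fun k _ => Finset.sum_congr rfl fun l _ => by ring
    rw [h1, h2]
    ring
  have symmQD : (∑ i ∈ Finset.Icc 1 Nx, ∑ j ∈ Finset.Icc 1 Ny, ∑ k ∈ Finset.Icc 1 Nx,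
        ∑ l ∈ Finset.Icc 1 Ny,
        hx i * hy j * (hx k * hy l * W (xc k - xc i) (yc l - yc j)) * D k l * ρ t i j)
      = ∑ i ∈ Finset.Icc 1 Nx, ∑ j ∈ Finset.Icc 1 Ny, ∑ k ∈ Finset.Icc 1 Nx,
        ∑ l ∈ Finset.Icc 1 Ny,
        hx i * hy j * (hx k * hy l * W (xc k - xc i) (yc l - yc j)) * ρ t k l * D i j := by
    rw [quad_swap]
    refine Finset.sum_congr rfl fun i _ => Finset.sum_congr rfl fun j _ =>
      Finset.sum_congr rfl fun k _ => Finset.sum_congr rfl fun l _ => ?_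
    have hw := hWsymm (xc k - xc i) (yc l - yc j)
    rw [neg_sub, neg_sub] at hw
    rw [hw]
    ring
  have step1 : E' = (∑ i ∈ Finset.Icc 1 Nx, ∑ j ∈ Finset.Icc 1 Ny,
      hx i * hy j * D i j * (φ i j + 1)) := by
    rw [hE'def]
    rw [Finset.sum_congr rfl fun i hi => Finset.sum_congr rfl fun j hj => e1 i hi j hj]
    simp only [Finset.sum_add_distrib, Finset.sum_sub_distrib, ← Finset.mul_sum]
    rw [symmQD]
    ring
  -- telescoping / summation by parts
  have e2 : ∀ i ∈ Finset.Icc 1 Nx, ∀ j ∈ Finset.Icc 1 Ny,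
      hx i * hy j * D i j * (φ i j + 1)
    = hy j * ((Cx t i j - Cx t (i - 1) j) * φ i j)
      + hx i * ((Cy t i j - Cy t i (j - 1)) * φ i j)
      + (hy j * (Cx t i j - Cx t (i - 1) j) + hx i * (Cy t i j - Cy t i (j - 1))) := by
    intro i hi j hj
    have hxi : hx i ≠ 0 := (hxpos i hi).ne'
    have hyj : hy j ≠ 0 := (hypos j hj).ne'
    simp only [hD]
    field_simp
  have hZx : (∑ i ∈ Finset.Icc 1 Nx, ∑ j ∈ Finset.Icc 1 Ny,
      hy j * (Cx t i j - Cx t (i - 1) j)) = 0 := by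
    rw [Finset.sum_comm]
    refine Finset.sum_eq_zero fun j _ => ?_
    rw [← Finset.mul_sum, tele_aux (fun i => Cx t i j) Nx (by omega), hCxN t j, hCx0 t j]
    ring
  have hZy : (∑ i ∈ Finset.Icc 1 Nx, ∑ j ∈ Finset.Icc 1 Ny,
      hx i * (Cy t i j - Cy t i (j - 1))) = 0 := by
    refine Finset.sum_eq_zero fun i _ => ?_
    rw [← Finset.mul_sum, tele_aux (fun j => Cy t i j) Ny (by omega), hCyN t i, hCy0 t i]
    ring
  have hX : (∑ i ∈ Finset.Icc 1 Nx, ∑ j ∈ Finset.Icc 1 Ny,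
      hy j * ((Cx t i j - Cx t (i - 1) j) * φ i j))
    = -∑ j ∈ Finset.Icc 1 Ny, ∑ i ∈ Finset.Icc 1 (Nx - 1),
        hy j * Cx t i j * (φ (i + 1) j - φ i j) := by
    rw [Finset.sum_comm]
    rw [← Finset.sum_neg_distrib]
    refine Finset.sum_congr rfl fun j _ => ?_
    rw [← Finset.mul_sum, abel_aux (fun i => Cx t i j) (fun i => φ i j) Nx (by omega),
      hCxN t j, hCx0 t j]
    rw [show ∀ x : ℝ, hy j * (0 * φ Nx j - 0 * φ 1 j - x) = -(hy j * x) from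
      fun x => by ring]
    rw [Finset.mul_sum]
    simp only [← Finset.sum_neg_distrib]
    refine Finset.sum_congr rfl fun i _ => by ring
  have hY : (∑ i ∈ Finset.Icc 1 Nx, ∑ j ∈ Finset.Icc 1 Ny,
      hx i * ((Cy t i j - Cy t i (j - 1)) * φ i j))
    = -∑ i ∈ Finset.Icc 1 Nx, ∑ j ∈ Finset.Icc 1 (Ny - 1),
        hx i * Cy t i j * (φ i (j + 1) - φ i j) := by
    rw [← Finset.sum_neg_distrib]
    refine Finset.sum_congr rfl fun i _ => ?_
    rw [← Finset.mul_sum, abel_aux (fun j => Cy t i j) (fun j => φ i j) Ny (by omega),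
      hCyN t i, hCy0 t i]
    rw [show ∀ x : ℝ, hx i * (0 * φ i Ny - 0 * φ i 1 - x) = -(hx i * x) from
      fun x => by ring]
    rw [Finset.mul_sum]
    simp only [← Finset.sum_neg_distrib]
    refine Finset.sum_congr rfl fun j _ => by ring
  have step2 : (∑ i ∈ Finset.Icc 1 Nx, ∑ j ∈ Finset.Icc 1 Ny,
      hx i * hy j * D i j * (φ i j + 1))
    = ((∑ i ∈ Finset.Icc 1 Nx, ∑ j ∈ Finset.Icc 1 Ny,
        hy j * ((Cx t i j - Cx t (i - 1) j) * φ i j))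
      + (∑ i ∈ Finset.Icc 1 Nx, ∑ j ∈ Finset.Icc 1 Ny,
        hx i * ((Cy t i j - Cy t i (j - 1)) * φ i j)))
      + ((∑ i ∈ Finset.Icc 1 Nx, ∑ j ∈ Finset.Icc 1 Ny,
        hy j * (Cx t i j - Cx t (i - 1) j))
      + (∑ i ∈ Finset.Icc 1 Nx, ∑ j ∈ Finset.Icc 1 Ny,
        hx i * (Cy t i j - Cy t i (j - 1)))) := by
    rw [Finset.sum_congr rfl fun i hi => Finset.sum_congr rfl fun j hj => e2 i hi j hj]
    simp only [Finset.sum_add_distrib]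
  have hval : E' = -I t := by
    rw [step1, step2, hZx, hZy, hX, hY, hI t]
    simp only [hφdef]
    ring
  refine ⟨⟨E', hEd, hval.le⟩, ?_⟩
  -- nonnegativity of I
  rw [hI t]
  refine add_nonneg (Finset.sum_nonneg fun j hj => Finset.sum_nonneg fun i hi => ?_)
    (Finset.sum_nonneg fun i hi => Finset.sum_nonneg fun j hj => ?_)
  · have hmem := Finset.mem_Icc.mp hi
    have hiA : i ∈ Finset.Icc 1 Nx := Finset.mem_Icc.mpr ⟨hmem.1, by omega⟩
    have hi1A : i + 1 ∈ Finset.Icc 1 Nx := Finset.mem_Icc.mpr ⟨by omega, by omega⟩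
    have hu : 0 < ρ t i j / M t i j := div_pos (hρt i hiA j hj) (hMpos i hiA j hj)
    have hu' : 0 < ρ t (i + 1) j / M t (i + 1) j :=
      div_pos (hρt (i + 1) hi1A j hj) (hMpos (i + 1) hi1A j hj)
    have hMxhpos : 0 < Mxh t i j := by
      rw [hMxh t i hi j hj, hQ]; exact Real.exp_pos _
    have hhxh : 0 < hxhalf i := by
      rw [hhxhalf i hi]
      have h1 := hxpos i hiA
      have h2 := hxpos (i + 1) hi1A
      linarith
    have key := log_mono_prod _ _ hu hu'
    have hrw : hy j * Cx t i j *
        (Real.log (ρ t (i + 1) j / M t (i + 1) j) - Real.log (ρ t i j / M t i j))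
      = (hy j * (Mxh t i j / hxhalf i)) *
        ((ρ t (i + 1) j / M t (i + 1) j - ρ t i j / M t i j) *
          (Real.log (ρ t (i + 1) j / M t (i + 1) j) - Real.log (ρ t i j / M t i j))) := by
      rw [hCx t i hi j hj]; ring
    rw [hrw]
    exact mul_nonneg (mul_nonneg (hypos j hj).le (div_pos hMxhpos hhxh).le) key
  · have hmem := Finset.mem_Icc.mp hj
    have hjA : j ∈ Finset.Icc 1 Ny := Finset.mem_Icc.mpr ⟨hmem.1, by omega⟩
    have hj1A : j + 1 ∈ Finset.Icc 1 Ny := Finset.mem_Icc.mpr ⟨by omega, by omega⟩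
    have hu : 0 < ρ t i j / M t i j := div_pos (hρt i hi j hjA) (hMpos i hi j hjA)
    have hu' : 0 < ρ t i (j + 1) / M t i (j + 1) :=
      div_pos (hρt i hi (j + 1) hj1A) (hMpos i hi (j + 1) hj1A)
    have hMyhpos : 0 < Myh t i j := by
      rw [hMyh t i hi j hj, hQ]; exact Real.exp_pos _
    have hhyh : 0 < hyhalf j := by
      rw [hhyhalf j hj]
      have h1 := hypos j hjA
      have h2 := hypos (j + 1) hj1A
      linarith
    have key := log_mono_prod _ _ hu hu'
    have hrw : hx i * Cy t i j *
        (Real.log (ρ t i (j + 1) / M t i (j + 1)) - Real.log (ρ t i j / M t i j))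
      = (hx i * (Myh t i j / hyhalf j)) *
        ((ρ t i (j + 1) / M t i (j + 1) - ρ t i j / M t i j) *
          (Real.log (ρ t i (j + 1) / M t i (j + 1)) - Real.log (ρ t i j / M t i j))) := by
      rw [hCy t i hi j hj]; ring
    rw [hrw]
    exact mul_nonneg (mul_nonneg (hxpos i hi).le (div_pos hMyhpos hhyh).le) key
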